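/- Let R be a commutative ring, M an R-module, and let D₁ (playing the role of ∂̄), D₂ (playing the role of ∂), S (playing the role of ∂̄*), G and h be R-linear endomorphisms of M satisfying: D₁ ∘ G = G ∘ D₁, D₂ ∘ G = G ∘ D₂, D₂ ∘ S = − S ∘ D₂, D₂ ∘ D₂ = 0, D₂ ∘ D₁ = − D₁ ∘ D₂, G ∘ (D₁ ∘ S + S ∘ D₁) = id_M − h, and h ∘ D₂ = 0. Define τ = G ∘ S ∘ D₂. Then: (1) D₂ ∘ τ = 0; (2) τ ∘ D₂ = 0; and (3) D₁ ∘ τ − τ ∘ D₁ = D₂. -/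
import Mathlib

/-- Abstract form of the Kähler identities `∂τ = τ∂ = 0` and `[∂̄, τ] = ∂` for
`τ = G ∂̄* ∂`, where `D₁` plays the role of `∂̄`, `D₂` of `∂`, `S` of `∂̄*`,
`G` of the Green operator and `h` of the harmonic projector. -/
theorem tau_identities {R M : Type*} [CommRing R] [AddCommGroup M] [Module R M]
    (D₁ D₂ S G h : Module.End R M)
    (h1 : D₁ * G = G * D₁) (h2 : D₂ * G = G * D₂)
    (h3 : D₂ * S = -(S * D₂)) (h4 : D₂ * D₂ = 0) (h5 : D₂ * D₁ = -(D₁ * D₂))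
    (h6 : G * (D₁ * S + S * D₁) = 1 - h) (h7 : h * D₂ = 0) :
    D₂ * (G * S * D₂) = 0 ∧ (G * S * D₂) * D₂ = 0 ∧
      D₁ * (G * S * D₂) - (G * S * D₂) * D₁ = D₂ := by
  refine ⟨?_, ?_, ?_⟩
  · calc D₂ * (G * S * D₂) = D₂ * G * S * D₂ := by noncomm_ring
    _ = G * (D₂ * S) * D₂ := by rw [h2]; noncomm_ring
    _ = -(G * (S * (D₂ * D₂))) := by rw [h3]; noncomm_ring
    _ = 0 := by rw [h4]; simp
  · calc (G * S * D₂) * D₂ = G * (S * (D₂ * D₂)) := by noncomm_ring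
    _ = 0 := by rw [h4]; simp
  · have e1 : D₁ * (G * S * D₂) = G * (D₁ * S) * D₂ := by
      calc D₁ * (G * S * D₂) = D₁ * G * S * D₂ := by noncomm_ring
      _ = G * (D₁ * S) * D₂ := by rw [h1]; noncomm_ring
    have e2 : (G * S * D₂) * D₁ = -(G * (S * D₁) * D₂) := by
      calc (G * S * D₂) * D₁ = G * (S * (D₂ * D₁)) := by noncomm_ring
      _ = -(G * (S * D₁) * D₂) := by rw [h5]; noncomm_ring
    rw [e1, e2, sub_neg_eq_add]
    calc G * (D₁ * S) * D₂ + G * (S * D₁) * D₂ = G * (D₁ * S + S * D₁) * D₂ := by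
          noncomm_ring
    _ = (1 - h) * D₂ := by rw [h6]
    _ = D₂ := by rw [sub_mul, h7]; simp
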